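/- Let M be a quadratic module of ℝ[X_1,…,X_n]. Then the following are equivalent: (a) M is Archimedean; (b) there is some N ∈ ℕ such that N − (X_1² + ⋯ + X_n²) ∈ M; (c) there are m ∈ ℕ and a tuple g = (g_1,…,g_m) of polynomials of degree at most 1 with g_1,…,g_m ∈ M such that the polyhedron S(g) is non-empty and compact; (d) for each polynomial f of degree at most 1, there is some N ∈ ℕ such that N + f ∈ M. -/

import Mathlib

open MvPolynomial

noncomputable section

/-- `S(g) = {x ∈ ℝⁿ : g₁(x) ≥ 0, …, g_m(x) ≥ 0}`. -/
def SolSet {n m : ℕ} (g : Fin m → MvPolynomial (Fin n) ℝ) : Set (Fin n → ℝ) :=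
  {x | ∀ i, 0 ≤ eval x (g i)}

/-- `M` is a quadratic module of `ℝ[X₁,…,X_n]`. -/
def IsQuadraticModule {n : ℕ} (M : Set (MvPolynomial (Fin n) ℝ)) : Prop :=
  1 ∈ M ∧ (∀ p ∈ M, ∀ q ∈ M, p + q ∈ M) ∧
    ∀ p : MvPolynomial (Fin n) ℝ, ∀ q ∈ M, p ^ 2 * q ∈ M

/-- A quadratic module is Archimedean if for every polynomial `p` there is `N ∈ ℕ`
with `N - p ∈ M`. -/
def IsArchimedeanQM {n : ℕ} (M : Set (MvPolynomial (Fin n) ℝ)) : Prop :=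
  ∀ p : MvPolynomial (Fin n) ℝ, ∃ N : ℕ, (N : MvPolynomial (Fin n) ℝ) - p ∈ M

section ConeClosed

variable {E : Type*} [NormedAddCommGroup E] [NormedSpace ℝ E]

def coneSet {k : ℕ} (v : Fin k → E) : Set E :=
  {x | ∃ t : Fin k → ℝ, (∀ i, 0 ≤ t i) ∧ x = ∑ i, t i • v i}

lemma cone_reduce {k : ℕ} (v : Fin k → E) (T : Finset (Fin k)) :
    ∀ t : Fin k → ℝ, (∀ i, 0 ≤ t i) → (∀ i ∉ T, t i = 0) →
    ∃ T' : Finset (Fin k), (LinearIndependent ℝ (fun i : T' => v i)) ∧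
      ∃ s : Fin k → ℝ, (∀ i, 0 ≤ s i) ∧ (∀ i ∉ T', s i = 0) ∧
        ∑ i, s i • v i = ∑ i, t i • v i := by
  classical
  induction T using Finset.strongInductionOn with
  | _ T ih =>
    intro t ht ht0
    by_cases hli : LinearIndependent ℝ (fun i : T => v i)
    · exact ⟨T, hli, t, ht, ht0, rfl⟩
    · obtain ⟨g, hgsum, j, hj⟩ := Fintype.not_linearIndependent_iff.mp hli
      have key : ∀ c : Fin k → ℝ, (∀ i ∉ T, c i = 0) → (∑ i, c i • v i = 0) →
          (∃ i, 0 < c i) →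
          ∃ T' : Finset (Fin k), (LinearIndependent ℝ (fun i : T' => v i)) ∧
            ∃ s : Fin k → ℝ, (∀ i, 0 ≤ s i) ∧ (∀ i ∉ T', s i = 0) ∧
              ∑ i, s i • v i = ∑ i, t i • v i := by
        rintro c hc0 hcsum ⟨i1, hi1⟩
        have hi1T : i1 ∈ T := by
          by_contra h
          rw [hc0 i1 h] at hi1
          exact lt_irrefl 0 hi1
        set P : Finset (Fin k) := T.filter (fun i => 0 < c i) with hP
        have hPne : P.Nonempty := ⟨i1, by simp [hP, hi1T, hi1]⟩
        obtain ⟨i0, hi0P, hmin⟩ := P.exists_min_image (fun i => t i / c i) hPne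
        have hi0T : i0 ∈ T := (Finset.mem_filter.mp hi0P).1
        have hci0 : 0 < c i0 := (Finset.mem_filter.mp hi0P).2
        set r : ℝ := t i0 / c i0 with hr
        have hr0 : 0 ≤ r := div_nonneg (ht i0) hci0.le
        set s : Fin k → ℝ := fun i => t i - r * c i with hs
        have hs0 : ∀ i, 0 ≤ s i := by
          intro i
          by_cases hci : 0 < c i
          · have hiT : i ∈ T := by
              by_contra h
              rw [hc0 i h] at hci; exact lt_irrefl 0 hci
            have hiP : i ∈ P := Finset.mem_filter.mpr ⟨hiT, hci⟩
            have h1 := hmin i hiP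
            have h2 : r * c i ≤ t i := by
              rw [hr]
              calc t i0 / c i0 * c i ≤ t i / c i * c i :=
                    mul_le_mul_of_nonneg_right h1 hci.le
                _ = t i := div_mul_cancel₀ _ hci.ne'
            simpa [hs] using sub_nonneg.mpr h2
          · push_neg at hci
            have : r * c i ≤ 0 := mul_nonpos_of_nonneg_of_nonpos hr0 hci
            simp only [hs]
            linarith [ht i]
        have hsi0 : s i0 = 0 := by
          simp [hs, hr, div_mul_cancel₀ _ hci0.ne']
        have hssupp : ∀ i ∉ T.erase i0, s i = 0 := by
          intro i hi
          by_cases h : i = i0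
          · rw [h]; exact hsi0
          · have hiT : i ∉ T := fun hiT => hi (Finset.mem_erase.mpr ⟨h, hiT⟩)
            simp [hs, ht0 i hiT, hc0 i hiT]
        have hsum : ∑ i, s i • v i = ∑ i, t i • v i := by
          have h1 : ∑ i, s i • v i = ∑ i, (t i • v i - r • (c i • v i)) := by
            refine Finset.sum_congr rfl (fun i _ => ?_)
            simp only [hs]
            rw [sub_smul, smul_smul]
          rw [h1, Finset.sum_sub_distrib, ← Finset.smul_sum, hcsum, smul_zero, sub_zero]
        obtain ⟨T', hT', s', hs', hs'0, hsum'⟩ :=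
          ih (T.erase i0) (Finset.erase_ssubset hi0T) s hs0 hssupp
        exact ⟨T', hT', s', hs', hs'0, hsum'.trans hsum⟩
      set c : Fin k → ℝ := fun i => if h : i ∈ T then g ⟨i, h⟩ else 0 with hc
      have hc0 : ∀ i ∉ T, c i = 0 := fun i hi => by simp [hc, hi]
      have hcsum : ∑ i, c i • v i = 0 := by
        have h1 : ∑ i, c i • v i = ∑ i ∈ T, c i • v i := by
          refine (Finset.sum_subset (Finset.subset_univ T) ?_).symm
          intro i _ hi
          simp [hc0 i hi]
        have h2 : ∑ i ∈ T, c i • v i = ∑ i : T, g i • v i := by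
          rw [← Finset.sum_coe_sort T (fun i => c i • v i)]
          refine Finset.sum_congr rfl (fun i _ => ?_)
          simp [hc, i.2]
        rw [h1, h2]
        exact hgsum
      have hcj : c j.1 = g j := by simp [hc, j.2]
      by_cases hsign : 0 < c j.1
      · exact key c hc0 hcsum ⟨j.1, hsign⟩
      · have hneg : 0 < -c j.1 := by
          rcases lt_or_eq_of_le (not_lt.mp hsign) with h | h
          · linarith
          · exact absurd (hcj ▸ h.symm ▸ rfl : g j = c j.1) (by rw [hcj] at *; exact fun _ => hj (by linarith [h, hcj]))
        have := key (fun i => -c i) (fun i hi => by simp [hc0 i hi])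
          (by simpa [neg_smul] using congrArg Neg.neg hcsum) ⟨j.1, hneg⟩
        simpa using this

lemma isClosed_coneOn {k : ℕ} (v : Fin k → E) (T : Finset (Fin k))
    (h : LinearIndependent ℝ (fun i : T => v i)) :
    IsClosed {x : E | ∃ t : Fin k → ℝ, (∀ i, 0 ≤ t i) ∧ (∀ i ∉ T, t i = 0) ∧
      x = ∑ i, t i • v i} := by
  classical
  let L : (T → ℝ) →ₗ[ℝ] E :=
    { toFun := fun t => ∑ i : T, t i • v i
      map_add' := by intro a b; simp [add_smul, Finset.sum_add_distrib]
      map_smul' := by intro a b; simp [Finset.smul_sum, mul_smul] }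
  have hker : LinearMap.ker L = ⊥ := by
    rw [LinearMap.ker_eq_bot']
    intro m hm
    have := Fintype.linearIndependent_iff.mp h m hm
    funext i
    exact this i
  have hset : {x : E | ∃ t : Fin k → ℝ, (∀ i, 0 ≤ t i) ∧ (∀ i ∉ T, t i = 0) ∧
      x = ∑ i, t i • v i} = L '' {t : T → ℝ | ∀ i, 0 ≤ t i} := by
    ext x
    constructor
    · rintro ⟨t, ht, ht0, rfl⟩
      refine ⟨fun i => t i.1, fun i => ht i.1, ?_⟩
      show ∑ i : T, t i.1 • v i.1 = _
      rw [Finset.sum_coe_sort T (fun i => t i • v i)]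
      exact Finset.sum_subset (Finset.subset_univ T)
        (fun i _ hi => by rw [ht0 i hi, zero_smul])
    · rintro ⟨t, ht, rfl⟩
      refine ⟨fun i => if h : i ∈ T then t ⟨i, h⟩ else 0,
        fun i => ?_, fun i hi => by simp [hi], ?_⟩
      · by_cases h : i ∈ T
        · simpa [h] using ht ⟨i, h⟩
        · simp [h]
      show (L t : E) = _
      have h1 : ∑ i, (if h : i ∈ T then t ⟨i, h⟩ else (0:ℝ)) • v i
          = ∑ i ∈ T, (if h : i ∈ T then t ⟨i, h⟩ else (0:ℝ)) • v i := by
        refine (Finset.sum_subset (Finset.subset_univ T) ?_).symm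
        intro i _ hi
        simp [hi]
      rw [h1, ← Finset.sum_coe_sort T
        (fun i => (if h : i ∈ T then t ⟨i, h⟩ else (0:ℝ)) • v i)]
      show (∑ i : T, t i • v i.1) = ∑ i : T, _
      refine Finset.sum_congr rfl (fun i _ => ?_)
      simp [i.2]
  rw [hset]
  have hclosed : IsClosed {t : T → ℝ | ∀ i, 0 ≤ t i} := by
    have : {t : T → ℝ | ∀ i, 0 ≤ t i} = ⋂ i, {t : T → ℝ | 0 ≤ t i} := by
      ext t; simp [Set.mem_iInter]
    rw [this]
    exact isClosed_iInter (fun i => isClosed_le continuous_const (continuous_apply i))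
  exact (LinearMap.isClosedEmbedding_of_injective hker).isClosedMap _ hclosed


lemma isClosed_coneSet {k : ℕ} (v : Fin k → E) : IsClosed (coneSet v) := by
  classical
  have hunion : coneSet v = ⋃ (T : Finset (Fin k))
      (_ : LinearIndependent ℝ (fun i : T => v i)),
      {x : E | ∃ t : Fin k → ℝ, (∀ i, 0 ≤ t i) ∧ (∀ i ∉ T, t i = 0) ∧
        x = ∑ i, t i • v i} := by
    ext x
    simp only [Set.mem_iUnion, coneSet, Set.mem_setOf_eq]
    constructor
    · rintro ⟨t, ht, rfl⟩
      obtain ⟨T', hT', s, hs, hs0, hsum⟩ := cone_reduce v Finset.univ t ht (fun i hi => absurd (Finset.mem_univ i) hi)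
      exact ⟨T', hT', s, hs, hs0, hsum.symm⟩
    · rintro ⟨T, _, t, ht, _, rfl⟩
      exact ⟨t, ht, rfl⟩
  rw [hunion]
  exact isClosed_iUnion_of_finite (fun T => isClosed_iUnion_of_finite
    (fun hT => isClosed_coneOn v T hT))

lemma zero_mem_coneSet {k : ℕ} (v : Fin k → E) : (0 : E) ∈ coneSet v :=
  ⟨0, fun _ => le_refl _, by simp⟩

lemma gen_mem_coneSet {k : ℕ} (v : Fin k → E) (i : Fin k) : v i ∈ coneSet v := by
  classical
  refine ⟨fun j => if j = i then 1 else 0, fun j => by positivity, ?_⟩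
  simp [ite_smul, Finset.sum_ite_eq']

lemma smul_mem_coneSet {k : ℕ} (v : Fin k → E) {a : ℝ} (ha : 0 ≤ a) {x : E}
    (hx : x ∈ coneSet v) : a • x ∈ coneSet v := by
  obtain ⟨t, ht, rfl⟩ := hx
  exact ⟨fun i => a * t i, fun i => mul_nonneg ha (ht i),
    by rw [Finset.smul_sum]; exact Finset.sum_congr rfl fun i _ => smul_smul a (t i) (v i)⟩

lemma add_mem_coneSet {k : ℕ} (v : Fin k → E) {x y : E}
    (hx : x ∈ coneSet v) (hy : y ∈ coneSet v) : x + y ∈ coneSet v := by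
  obtain ⟨t, ht, rfl⟩ := hx
  obtain ⟨s, hs, rfl⟩ := hy
  exact ⟨fun i => t i + s i, fun i => add_nonneg (ht i) (hs i),
    by rw [← Finset.sum_add_distrib]; exact Finset.sum_congr rfl fun i _ => (add_smul _ _ _).symm⟩

lemma convex_coneSet {k : ℕ} (v : Fin k → E) : Convex ℝ (coneSet v) := by
  intro x hx y hy a b ha hb _
  exact add_mem_coneSet v (smul_mem_coneSet v ha hx) (smul_mem_coneSet v hb hy)

/-- Affine Farkas lemma. -/
lemma farkas {n m : ℕ} (b : Fin m → ℝ) (a : Fin m → Fin n → ℝ)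
    (hne : ∃ x : Fin n → ℝ, ∀ i, 0 ≤ b i + ∑ j, a i j * x j)
    (hcomp : IsCompact {x : Fin n → ℝ | ∀ i, 0 ≤ b i + ∑ j, a i j * x j})
    (c0 : ℝ) (c : Fin n → ℝ)
    (hpos : ∀ x : Fin n → ℝ, (∀ i, 0 ≤ b i + ∑ j, a i j * x j) →
      0 ≤ c0 + ∑ j, c j * x j) :
    ∃ (l0 : ℝ) (l : Fin m → ℝ), 0 ≤ l0 ∧ (∀ i, 0 ≤ l i) ∧
      c0 = l0 + ∑ i, l i * b i ∧ ∀ j, c j = ∑ i, l i * a i j := by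
  classical
  set w : Fin (m + 1) → ℝ × (Fin n → ℝ) :=
    Fin.cons ((1 : ℝ), (0 : Fin n → ℝ)) (fun i => (b i, a i)) with hw
  have hmain : ((c0, c) : ℝ × (Fin n → ℝ)) ∈ coneSet w := by
    by_contra hmem
    obtain ⟨φ, u, hu, hu'⟩ :=
      geometric_hahn_banach_closed_point (convex_coneSet w) (isClosed_coneSet w) hmem
    have hu0 : 0 < u := by
      have := hu 0 (zero_mem_coneSet w)
      simpa using this
    have hle : ∀ y ∈ coneSet w, φ y ≤ 0 := by
      intro y hy
      by_contra hpos'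
      push_neg at hpos'
      have ht : (0:ℝ) ≤ (u + 1) / φ y := by positivity
      have := hu _ (smul_mem_coneSet w ht hy)
      rw [map_smul, smul_eq_mul, div_mul_cancel₀ _ (ne_of_gt hpos')] at this
      linarith
    set s0 : ℝ := φ (1, 0) with hs0def
    set q : Fin n → ℝ := fun j => φ (0, (Pi.single j (1:ℝ) : Fin n → ℝ)) with hqdef
    have hdecomp : ∀ (γ : ℝ) (y : Fin n → ℝ), φ (γ, y) = γ * s0 + ∑ j, y j * q j := by
      intro γ y
      have hxy : ((γ, y) : ℝ × (Fin n → ℝ)) =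
          γ • (((1:ℝ), (0 : Fin n → ℝ)) : ℝ × (Fin n → ℝ)) +
            ∑ j : Fin n, y j •
              (((0:ℝ), (Pi.single j (1:ℝ) : Fin n → ℝ)) : ℝ × (Fin n → ℝ)) := by
        refine Prod.ext ?_ ?_
        · simp [Prod.fst_sum]
        · simp only [Prod.snd_add, Prod.smul_snd, Prod.snd_sum, smul_zero, zero_add]
          funext k
          rw [Finset.sum_apply]
          simp only [Pi.smul_apply, Pi.single_apply, smul_eq_mul, mul_ite, mul_one, mul_zero]
          rw [Finset.sum_ite_eq Finset.univ k y]
          simp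
        
      rw [hxy, map_add, map_smul, map_sum]
      simp only [smul_eq_mul, hs0def, hqdef]
      congr 1
      refine Finset.sum_congr rfl fun j _ => ?_
      rw [map_smul, smul_eq_mul]
    have hs0 : s0 ≤ 0 := by
      have := hle (w 0) (gen_mem_coneSet w 0)
      rw [hw] at this
      simpa [Fin.cons_zero] using this
    have hgen : ∀ i : Fin m, b i * s0 + ∑ j, a i j * q j ≤ 0 := by
      intro i
      have := hle (w i.succ) (gen_mem_coneSet w i.succ)
      rw [hw] at this
      simp only [Fin.cons_succ] at this
      rwa [hdecomp (b i) (a i)] at this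
    have hcc : 0 < φ (c0, c) := lt_trans hu0 hu'
    rw [hdecomp c0 c] at hcc
    rcases lt_or_eq_of_le hs0 with hs0lt | hs0eq
    · set x : Fin n → ℝ := fun j => q j / s0 with hx
      have hxS : ∀ i, 0 ≤ b i + ∑ j, a i j * x j := by
        intro i
        have h1 : b i + ∑ j, a i j * x j = (b i * s0 + ∑ j, a i j * q j) / s0 := by
          rw [add_div]
          congr 1
          · rw [mul_div_assoc, div_self hs0lt.ne, mul_one]
          · rw [Finset.sum_div]
            exact Finset.sum_congr rfl fun j _ => by rw [hx]; ring
        rw [h1, ← neg_div_neg_eq]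
        exact div_nonneg (by linarith [hgen i]) (by linarith)
      have h2 := hpos x hxS
      have h3 : c0 * s0 + ∑ j, c j * q j = s0 * (c0 + ∑ j, c j * x j) := by
        rw [mul_add, Finset.mul_sum]
        congr 1
        · ring
        · refine Finset.sum_congr rfl fun j _ => ?_
          show c j * q j = s0 * (c j * (q j / s0))
          rw [mul_comm s0 _, mul_assoc, div_mul_cancel₀ _ hs0lt.ne]
      rw [h3] at hcc
      nlinarith
    · by_cases hq0 : q = 0
      · rw [hs0eq, hq0] at hcc
        simp at hcc
      · obtain ⟨x₀, hx₀⟩ := hne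
        obtain ⟨R, hR⟩ := hcomp.isBounded.exists_norm_le
        have hqnorm : 0 < ‖q‖ := norm_pos_iff.mpr hq0
        set t : ℝ := (R + ‖x₀‖ + 1) / ‖q‖ with htdef
        have htpos : 0 ≤ t := by
          have hR0 : 0 ≤ R := le_trans (norm_nonneg x₀) (hR x₀ hx₀)
          positivity
        have hmemS : ∀ i, 0 ≤ b i + ∑ j, a i j * (x₀ j - t * q j) := by
          intro i
          have hqi : ∑ j, a i j * q j ≤ 0 := by
            have := hgen i
            rw [hs0eq] at this
            simpa using this
          have heq : ∑ j, a i j * (x₀ j - t * q j)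
              = ∑ j, a i j * x₀ j - t * ∑ j, a i j * q j := by
            rw [Finset.mul_sum, ← Finset.sum_sub_distrib]
            exact Finset.sum_congr rfl fun j _ => by ring
          rw [heq]
          have h4 := hx₀ i
          nlinarith
        have hnorm : ‖x₀ - t • q‖ ≤ R := by
          refine hR _ ?_
          intro i
          have := hmemS i
          simpa [Pi.sub_apply, Pi.smul_apply, smul_eq_mul] using this
        have h5 : ‖t • q‖ - ‖x₀‖ ≤ ‖x₀ - t • q‖ := by
          rw [norm_sub_rev]
          exact norm_sub_norm_le _ _
        have h7 : ‖t • q‖ = t * ‖q‖ := by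
          rw [norm_smul, Real.norm_eq_abs, abs_of_nonneg htpos]
        have h8 : t * ‖q‖ = R + ‖x₀‖ + 1 := by
          rw [htdef]; field_simp
        nlinarith
  obtain ⟨t, ht, hsum⟩ := hmain
  have h1 : c0 = (∑ i, t i • w i).1 := congrArg Prod.fst hsum
  have h2 : c = (∑ i, t i • w i).2 := congrArg Prod.snd hsum
  refine ⟨t 0, fun i => t i.succ, ht 0, fun i => ht i.succ, ?_, ?_⟩
  · rw [Prod.fst_sum] at h1
    simp only [hw, Fin.sum_univ_succ, Fin.cons_zero, Fin.cons_succ, Prod.smul_fst,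
      smul_eq_mul, mul_one] at h1
    exact h1
  · intro j
    have h3 := congrFun h2 j
    rw [Prod.snd_sum, Finset.sum_apply] at h3
    simp only [hw, Fin.sum_univ_succ, Fin.cons_zero, Fin.cons_succ, Prod.smul_snd,
      Pi.smul_apply, smul_eq_mul, smul_zero, Pi.zero_apply, mul_zero, zero_add] at h3
    exact h3

end ConeClosed

section QMfacts

variable {n : ℕ} {M : Set (MvPolynomial (Fin n) ℝ)}

lemma QM.smulC_mem (hM : IsQuadraticModule M) {c : ℝ} (hc : 0 ≤ c)
    {q : MvPolynomial (Fin n) ℝ} (hq : q ∈ M) : C c * q ∈ M := by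
  have := hM.2.2 (C (Real.sqrt c)) q hq
  rwa [← map_pow, Real.sq_sqrt hc] at this

lemma QM.const_mem (hM : IsQuadraticModule M) {c : ℝ} (hc : 0 ≤ c) :
    (C c : MvPolynomial (Fin n) ℝ) ∈ M := by
  have := QM.smulC_mem hM hc hM.1
  rwa [mul_one] at this

lemma QM.sq_mem (hM : IsQuadraticModule M) (p : MvPolynomial (Fin n) ℝ) : p ^ 2 ∈ M := by
  have := hM.2.2 p 1 hM.1
  rwa [mul_one] at this

lemma QM.add_sum_mem (hM : IsQuadraticModule M) {ι : Type*} (s : Finset ι)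
    (f : ι → MvPolynomial (Fin n) ℝ) (hf : ∀ i ∈ s, f i ∈ M)
    {p : MvPolynomial (Fin n) ℝ} (hp : p ∈ M) : p + ∑ i ∈ s, f i ∈ M := by
  classical
  induction s using Finset.induction with
  | empty => simpa using hp
  | insert _ _ hni ih =>
    rename_i a s'
    rw [Finset.sum_insert hni, add_comm (f a), ← add_assoc]
    exact hM.2.1 _ (ih (fun i hi => hf i (Finset.mem_insert_of_mem hi)))
      _ (hf a (Finset.mem_insert_self a s'))

lemma exp_classify (d : Fin n →₀ ℕ) (hd : (d.sum fun _ e => e) ≤ 1) :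
    d = 0 ∨ ∃ i, d = Finsupp.single i 1 := by
  classical
  rcases eq_or_ne d 0 with h | h
  · exact Or.inl h
  · right
    obtain ⟨i, hi⟩ := Finsupp.support_nonempty_iff.mpr h
    have hdi : 1 ≤ d i := Nat.one_le_iff_ne_zero.mpr (Finsupp.mem_support_iff.mp hi)
    have hsub : d.support ⊆ {i} := by
      intro j hj
      by_contra hji
      have hji' : j ≠ i := by simpa using hji
      have hsub2 : ({j, i} : Finset (Fin n)) ⊆ d.support := by
        intro k hk
        simp only [Finset.mem_insert, Finset.mem_singleton] at hk
        rcases hk with rfl | rfl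
        · exact hj
        · exact hi
      have h2 : d j + d i ≤ d.sum fun _ e => e := by
        rw [Finsupp.sum]
        calc d j + d i = ∑ k ∈ ({j, i} : Finset (Fin n)), d k :=
              (Finset.sum_pair hji').symm
          _ ≤ ∑ k ∈ d.support, d k :=
              Finset.sum_le_sum_of_subset hsub2
      have hdj : 1 ≤ d j := Nat.one_le_iff_ne_zero.mpr (Finsupp.mem_support_iff.mp hj)
      omega
    have hsupp : d.support = {i} :=
      Finset.Subset.antisymm hsub (Finset.singleton_subset_iff.mpr hi)
    obtain ⟨hne, heq⟩ := Finsupp.support_eq_singleton.mp hsupp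
    have hsum : (d.sum fun _ e => e) = d i := by
      rw [Finsupp.sum, hsupp, Finset.sum_singleton]
    rw [hsum] at hd
    have hd1 : d i = 1 := le_antisymm hd hdi
    exact ⟨i, by rw [heq, hd1]⟩

lemma linear_decomp (p : MvPolynomial (Fin n) ℝ) (hp : p.totalDegree ≤ 1) :
    p = C (coeff 0 p) + ∑ i, C (coeff (Finsupp.single i 1) p) * X i := by
  classical
  apply MvPolynomial.ext
  intro d
  have hXc : ∀ (i : Fin n) (a : ℝ), coeff d (C a * X i)
      = if Finsupp.single i 1 = d then a else 0 := by
    intro i a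
    rw [coeff_C_mul, coeff_X', mul_ite, mul_one, mul_zero]
  rw [coeff_add, coeff_C, coeff_sum]
  simp only [hXc]
  by_cases hd0 : d = 0
  · subst hd0
    rw [if_pos rfl, Finset.sum_eq_zero, add_zero]
    intro i _
    rw [if_neg]
    exact fun hle => one_ne_zero (Finsupp.single_eq_zero.mp hle)
  · rw [if_neg (fun h => hd0 h.symm), zero_add]
    by_cases hsing : ∃ i, d = Finsupp.single i 1
    · obtain ⟨i, rfl⟩ := hsing
      have hcond : ∀ j : Fin n, (Finsupp.single j 1 = Finsupp.single i 1) ↔ j = i := by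
        intro j
        constructor
        · intro hji
          exact (Finsupp.single_left_inj one_ne_zero).mp hji
        · rintro rfl; rfl
      rw [Finset.sum_congr rfl (fun j _ => by rw [if_congr (hcond j) rfl rfl])]
      rw [Finset.sum_ite_eq' Finset.univ i, if_pos (Finset.mem_univ i)]
    · have hcoeff : coeff d p = 0 := by
        by_contra hc
        have hdsupp : d ∈ p.support := MvPolynomial.mem_support_iff.mpr hc
        have := MvPolynomial.le_totalDegree hdsupp
        have hdeg : (d.sum fun _ e => e) ≤ 1 := le_trans this hp
        rcases exp_classify d hdeg with h | h
        · exact hd0 h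
        · exact hsing h
      rw [hcoeff, Finset.sum_eq_zero]
      intro j _
      rw [if_neg]
      intro hje
      exact hsing ⟨j, hje.symm⟩

lemma linear_eval (c0 : ℝ) (c : Fin n → ℝ) (x : Fin n → ℝ) :
    eval x (C c0 + ∑ i, C (c i) * X i) = c0 + ∑ i, c i * x i := by
  simp

lemma linear_totalDegree (c0 : ℝ) (c : Fin n → ℝ) :
    (C c0 + ∑ i, C (c i) * X i : MvPolynomial (Fin n) ℝ).totalDegree ≤ 1 := by
  refine le_trans (totalDegree_add _ _) (max_le (by simp [totalDegree_C]) ?_)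
  refine le_trans (totalDegree_finset_sum _ _) ?_
  refine Finset.sup_le fun i _ => ?_
  refine le_trans (totalDegree_mul _ _) ?_
  simp [totalDegree_C, totalDegree_X]

/-- The "ring of bounded elements". -/
def Hbdd {n : ℕ} (M : Set (MvPolynomial (Fin n) ℝ)) : Set (MvPolynomial (Fin n) ℝ) :=
  {p | ∃ x : ℝ, (C x - p ∈ M) ∧ (C x + p ∈ M)}

lemma QM.shiftC (hM : IsQuadraticModule M) {q : MvPolynomial (Fin n) ℝ} {x y : ℝ}
    (hxy : x ≤ y) (h : C x - q ∈ M) : C y - q ∈ M := by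
  have heq : (C y : MvPolynomial (Fin n) ℝ) - q = C (y - x) + (C x - q) := by
    rw [map_sub]; ring
  rw [heq]
  exact hM.2.1 _ (QM.const_mem hM (by linarith)) _ h

lemma QM.H_nat (hM : IsQuadraticModule M) {q : MvPolynomial (Fin n) ℝ}
    (h : q ∈ Hbdd M) : ∃ N : ℕ, (N : MvPolynomial (Fin n) ℝ) - q ∈ M := by
  obtain ⟨x, hx, -⟩ := h
  refine ⟨⌈x⌉₊, ?_⟩
  have := QM.shiftC hM (Nat.le_ceil x) hx
  rwa [map_natCast] at this

lemma QM.H_const (hM : IsQuadraticModule M) (r : ℝ) :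
    (C r : MvPolynomial (Fin n) ℝ) ∈ Hbdd M := by
  refine ⟨|r|, ?_, ?_⟩
  · rw [← map_sub]
    exact QM.const_mem hM (by cases abs_cases r <;> linarith [abs_nonneg r])
  · rw [← map_add]
    exact QM.const_mem hM (by cases abs_cases r <;> linarith [abs_nonneg r])

lemma QM.H_add (hM : IsQuadraticModule M) {p q : MvPolynomial (Fin n) ℝ}
    (hp : p ∈ Hbdd M) (hq : q ∈ Hbdd M) : p + q ∈ Hbdd M := by
  obtain ⟨x, hx1, hx2⟩ := hp
  obtain ⟨y, hy1, hy2⟩ := hq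
  refine ⟨x + y, ?_, ?_⟩
  · have := hM.2.1 _ hx1 _ hy1
    rwa [show (C x - p) + (C y - q) = C (x + y) - (p + q) by rw [map_add]; ring] at this
  · have := hM.2.1 _ hx2 _ hy2
    rwa [show (C x + p) + (C y + q) = C (x + y) + (p + q) by rw [map_add]; ring] at this

lemma QM.H_neg (hM : IsQuadraticModule M) {p : MvPolynomial (Fin n) ℝ}
    (hp : p ∈ Hbdd M) : -p ∈ Hbdd M := by
  obtain ⟨x, hx1, hx2⟩ := hp
  exact ⟨x, by rwa [sub_neg_eq_add], by rwa [← sub_eq_add_neg]⟩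

lemma QM.H_smul (hM : IsQuadraticModule M) (r : ℝ) {p : MvPolynomial (Fin n) ℝ}
    (hp : p ∈ Hbdd M) : C r * p ∈ Hbdd M := by
  -- first handle nonnegative r
  have key : ∀ s : ℝ, 0 ≤ s → ∀ q : MvPolynomial (Fin n) ℝ, q ∈ Hbdd M →
      C s * q ∈ Hbdd M := by
    intro s hs q hq
    obtain ⟨x, hx1, hx2⟩ := hq
    refine ⟨s * x, ?_, ?_⟩
    · have := QM.smulC_mem hM hs hx1
      rwa [show C s * (C x - q) = C (s * x) - C s * q by rw [map_mul]; ring] at this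
    · have := QM.smulC_mem hM hs hx2
      rwa [show C s * (C x + q) = C (s * x) + C s * q by rw [map_mul]; ring] at this
  rcases le_or_gt 0 r with hr | hr
  · exact key r hr p hp
  · have := key (-r) (by linarith) _ (QM.H_neg hM hp)
    rwa [show C (-r) * -p = C r * p by rw [map_neg]; ring] at this

lemma QM.H_sq (hM : IsQuadraticModule M) {p : MvPolynomial (Fin n) ℝ}
    (hp : p ∈ Hbdd M) : p ^ 2 ∈ Hbdd M := by
  obtain ⟨x₀, hx1, hx2⟩ := hp
  set x : ℝ := max x₀ 1 with hxdef
  have hx1' : C x - p ∈ M := QM.shiftC hM (le_max_left _ _) hx1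
  have hx2' : C x + p ∈ M := by
    have heq : (C x : MvPolynomial (Fin n) ℝ) + p = C (x - x₀) + (C x₀ + p) := by
      rw [map_sub]; ring
    rw [heq]
    exact hM.2.1 _ (QM.const_mem hM (sub_nonneg.mpr (le_max_left _ _))) _ hx2
  have hxpos : (0:ℝ) < x := lt_of_lt_of_le one_pos (le_max_right _ _)
  have hsum : (C x + p) ^ 2 * (C x - p) + (C x - p) ^ 2 * (C x + p)
      = C (2 * x) * (C (x ^ 2) - p ^ 2) := by
    rw [map_mul, map_pow, map_ofNat]
    ring
  have hmem : C (2 * x) * (C (x ^ 2) - p ^ 2) ∈ M := by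
    rw [← hsum]
    exact hM.2.1 _ (hM.2.2 _ _ hx1') _ (hM.2.2 _ _ hx2')
  have hfinal : C (x ^ 2) - p ^ 2 ∈ M := by
    have := QM.smulC_mem hM (c := 1 / (2 * x)) (by positivity) hmem
    rwa [← mul_assoc, ← map_mul, one_div_mul_cancel (by positivity), map_one, one_mul]
      at this
  refine ⟨x ^ 2, hfinal, ?_⟩
  have := hM.2.1 _ (QM.const_mem hM (le_of_lt (by positivity : (0:ℝ) < x ^ 2)))
    _ (QM.sq_mem hM p)
  exact this

lemma QM.H_mul (hM : IsQuadraticModule M) {p q : MvPolynomial (Fin n) ℝ}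
    (hp : p ∈ Hbdd M) (hq : q ∈ Hbdd M) : p * q ∈ Hbdd M := by
  have h1 : (p + q) ^ 2 ∈ Hbdd M := QM.H_sq hM (QM.H_add hM hp hq)
  have h2 : (p - q) ^ 2 ∈ Hbdd M := by
    have := QM.H_sq hM (QM.H_add hM hp (QM.H_neg hM hq))
    rwa [← sub_eq_add_neg] at this
  have h3 := QM.H_smul hM (1/4) (QM.H_add hM h1 (QM.H_neg hM h2))
  have h4 : ((p + q) ^ 2 + -(p - q) ^ 2) = C (4:ℝ) * (p * q) := by
    rw [map_ofNat]; ring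
  rw [h4, ← mul_assoc, ← map_mul,
    show (1/4 : ℝ) * 4 = 1 by norm_num, map_one, one_mul] at h3
  exact h3

lemma QM.arch_of_X_mem (hM : IsQuadraticModule M) (hX : ∀ i, X i ∈ Hbdd M) :
    IsArchimedeanQM M := by
  have hall : ∀ p : MvPolynomial (Fin n) ℝ, p ∈ Hbdd M := by
    intro p
    induction p using MvPolynomial.induction_on with
    | C a => exact QM.H_const hM a
    | add p q hp hq => exact QM.H_add hM hp hq
    | mul_X p i hp => exact QM.H_mul hM hp (hX i)
  intro p
  exact QM.H_nat hM (hall p)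

lemma box_construction (M' : Set (MvPolynomial (Fin n) ℝ)) (K : Fin n → ℕ) (N : ℕ)
    (hK : ∀ i, ((K i : MvPolynomial (Fin n) ℝ)) + X i ∈ M')
    (hN : ((N : MvPolynomial (Fin n) ℝ)) - ∑ i, X i ∈ M') :
    ∃ (m : ℕ) (g : Fin m → MvPolynomial (Fin n) ℝ),
      (∀ i, (g i).totalDegree ≤ 1 ∧ g i ∈ M') ∧
      (SolSet g).Nonempty ∧ IsCompact (SolSet g) := by
  classical
  refine ⟨n + 1, Fin.snoc (fun i => ((K i : MvPolynomial (Fin n) ℝ)) + X i)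
    (((N : MvPolynomial (Fin n) ℝ)) - ∑ i, X i), ?_, ?_, ?_⟩
  · intro i
    induction i using Fin.lastCases with
    | last =>
      rw [Fin.snoc_last]
      constructor
      · rw [sub_eq_add_neg]
        refine le_trans (totalDegree_add _ _) (max_le ?_ ?_)
        · have h0 : ((N : MvPolynomial (Fin n) ℝ)).totalDegree = 0 := by
            rw [← map_natCast (C : ℝ →+* MvPolynomial (Fin n) ℝ) N, totalDegree_C]
          omega
        · rw [totalDegree_neg]
          refine le_trans (totalDegree_finset_sum _ _) ?_
          exact Finset.sup_le fun j _ => le_of_eq (totalDegree_X j)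
      · exact hN
    | cast i =>
      rw [Fin.snoc_castSucc]
      constructor
      · refine le_trans (totalDegree_add _ _) (max_le ?_ ?_)
        · have h0 : ((K i : MvPolynomial (Fin n) ℝ)).totalDegree = 0 := by
            rw [← map_natCast (C : ℝ →+* MvPolynomial (Fin n) ℝ) (K i), totalDegree_C]
          omega
        · exact le_of_eq (totalDegree_X i)
      · exact hK i
  · refine ⟨0, fun i => ?_⟩
    induction i using Fin.lastCases with
    | last => rw [Fin.snoc_last]; simp
    | cast i => rw [Fin.snoc_castSucc]; simp
  · have hclosed : IsClosed (SolSet (Fin.snoc (fun i => ((K i : MvPolynomial (Fin n) ℝ)) + X i)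
        (((N : MvPolynomial (Fin n) ℝ)) - ∑ i, X i))) := by
      have : SolSet (Fin.snoc (fun i => ((K i : MvPolynomial (Fin n) ℝ)) + X i)
          (((N : MvPolynomial (Fin n) ℝ)) - ∑ i, X i)) =
          ⋂ i, (fun x => eval x ((Fin.snoc (fun i => ((K i : MvPolynomial (Fin n) ℝ)) + X i)
            (((N : MvPolynomial (Fin n) ℝ)) - ∑ i, X i) : Fin (n+1) → _) i)) ⁻¹'
              (Set.Ici 0) := by
        ext x
        simp [SolSet, Set.mem_iInter]
      rw [this]
      exact isClosed_iInter fun i =>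
        IsClosed.preimage (MvPolynomial.continuous_eval _) isClosed_Ici
    refine IsCompact.of_isClosed_subset
      (isCompact_Icc (a := fun i => -(K i : ℝ)) (b := fun i => (N : ℝ) + ∑ j, (K j : ℝ)))
      hclosed ?_
    intro x hx
    have hlow : ∀ i, -(K i : ℝ) ≤ x i := by
      intro i
      have := hx (Fin.castSucc i)
      rw [Fin.snoc_castSucc] at this
      simp only [map_add, map_natCast, eval_X] at this
      · linarith [this]
    have hlast := hx (Fin.last n)
    rw [Fin.snoc_last] at hlast
    simp only [map_sub, map_natCast, map_sum, eval_X] at hlast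
    have hsum : ∑ j, x j ≤ (N : ℝ) := by linarith [hlast]
    constructor
    · intro i
      exact hlow i
    · intro i
      show x i ≤ (N : ℝ) + ∑ j, (K j : ℝ)
      have h1 : x i = (∑ j, x j) - ∑ j ∈ Finset.univ.erase i, x j := by
        rw [← Finset.add_sum_erase Finset.univ x (Finset.mem_univ i)]
        ring
      have h2 : -(∑ j ∈ Finset.univ.erase i, (K j : ℝ)) ≤ ∑ j ∈ Finset.univ.erase i, x j := by
        rw [← Finset.sum_neg_distrib]
        exact Finset.sum_le_sum fun j _ => hlow j
      have h3 : ∑ j ∈ Finset.univ.erase i, (K j : ℝ) ≤ ∑ j, (K j : ℝ) :=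
        Finset.sum_le_sum_of_subset_of_nonneg (Finset.erase_subset i Finset.univ)
          (fun j _ _ => Nat.cast_nonneg _)
      have h3' : (0:ℝ) ≤ ∑ j ∈ Finset.univ.erase i, (K j : ℝ) :=
        Finset.sum_nonneg fun j _ => Nat.cast_nonneg _
      linarith

lemma c_implies_d (hM : IsQuadraticModule M)
    (hc : ∃ (m : ℕ) (g : Fin m → MvPolynomial (Fin n) ℝ),
      (∀ i, (g i).totalDegree ≤ 1 ∧ g i ∈ M) ∧
      (SolSet g).Nonempty ∧ IsCompact (SolSet g)) :
    ∀ f : MvPolynomial (Fin n) ℝ, f.totalDegree ≤ 1 →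
      ∃ N : ℕ, (N : MvPolynomial (Fin n) ℝ) + f ∈ M := by
  classical
  obtain ⟨m, g, hg, hne, hcomp⟩ := hc
  intro f hf
  set b : Fin m → ℝ := fun i => coeff 0 (g i) with hb
  set a : Fin m → Fin n → ℝ := fun i j => coeff (Finsupp.single j 1) (g i) with ha
  have hgi : ∀ i, g i = C (b i) + ∑ j, C (a i j) * X j :=
    fun i => linear_decomp (g i) (hg i).1
  have hevalg : ∀ (x : Fin n → ℝ) (i : Fin m),
      eval x (g i) = b i + ∑ j, a i j * x j := by
    intro x i
    conv_lhs => rw [hgi i]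
    simp
  have hSeq : SolSet g = {x : Fin n → ℝ | ∀ i, 0 ≤ b i + ∑ j, a i j * x j} := by
    ext x
    simp only [SolSet, Set.mem_setOf_eq]
    constructor <;> intro h i <;> [rw [← hevalg x i]; rw [hevalg x i]] <;> exact h i
  set c0 : ℝ := coeff 0 f with hc0
  set c : Fin n → ℝ := fun j => coeff (Finsupp.single j 1) f with hcv
  have hfd : f = C c0 + ∑ j, C (c j) * X j := linear_decomp f hf
  have hevalf : ∀ x : Fin n → ℝ, eval x f = c0 + ∑ j, c j * x j := by
    intro x
    conv_lhs => rw [hfd]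
    simp
  -- f attains a minimum on the compact nonempty SolSet g
  obtain ⟨x₀, hx₀S, hx₀min⟩ := hcomp.exists_isMinOn hne
    (MvPolynomial.continuous_eval f).continuousOn
  obtain ⟨N, hN⟩ := exists_nat_ge (-(eval x₀ f))
  have hpos : ∀ x : Fin n → ℝ, (∀ i, 0 ≤ b i + ∑ j, a i j * x j) →
      0 ≤ ((N : ℝ) + c0) + ∑ j, c j * x j := by
    intro x hx
    have hxS : x ∈ SolSet g := by rw [hSeq]; exact hx
    have := isMinOn_iff.mp hx₀min x hxS
    rw [hevalf x] at this
    linarith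
  obtain ⟨l0, l, hl0, hl, hrepr0, hreprj⟩ := farkas b a
    (by obtain ⟨x, hx⟩ := hne; exact ⟨x, by rwa [hSeq] at hx⟩)
    (by rwa [hSeq] at hcomp) ((N : ℝ) + c0) c hpos
  refine ⟨N, ?_⟩
  have hmain : (N : MvPolynomial (Fin n) ℝ) + f = C l0 + ∑ i, C (l i) * g i := by
    have h1 : ∀ i : Fin m, C (l i) * g i
        = C (l i * b i) + ∑ j, C (l i * a i j) * X j := by
      intro i
      rw [hgi i, mul_add, ← map_mul, Finset.mul_sum]
      congr 1
      exact Finset.sum_congr rfl fun j _ => by rw [← mul_assoc, ← map_mul]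
    rw [Finset.sum_congr rfl fun i _ => h1 i, Finset.sum_add_distrib]
    rw [Finset.sum_comm (f := fun i j => C (l i * a i j) * X j)]
    have h2 : ∀ j : Fin n, ∑ i, C (l i * a i j) * X j = C (∑ i, l i * a i j) * X j := by
      intro j
      rw [map_sum, Finset.sum_mul]
    rw [Finset.sum_congr rfl fun j _ => h2 j]
    have h3 : (C l0 : MvPolynomial (Fin n) ℝ) + ∑ i, C (l i * b i)
        = C ((N : ℝ) + c0) := by
      rw [← map_sum, ← map_add, ← hrepr0]
    rw [← add_assoc, h3]
    have h4 : ∀ j : Fin n, (∑ i, l i * a i j) = c j := fun j => (hreprj j).symm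
    rw [Finset.sum_congr rfl fun j _ => by rw [h4 j]]
    rw [hfd, ← map_natCast (C : ℝ →+* MvPolynomial (Fin n) ℝ) N, ← add_assoc, ← map_add]
  rw [hmain]
  exact QM.add_sum_mem hM Finset.univ _
    (fun i _ => QM.smulC_mem hM (hl i) (hg i).2) (QM.const_mem hM hl0)

lemma QM.b_implies_arch (hM : IsQuadraticModule M)
    (hb : ∃ N : ℕ, (N : MvPolynomial (Fin n) ℝ) - ∑ i : Fin n, X i ^ 2 ∈ M) :
    IsArchimedeanQM M := by
  obtain ⟨N, hN⟩ := hb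
  have hsq : ∀ i : Fin n, C ((N : ℝ)) - X i ^ 2 ∈ M := by
    intro i
    have heq : C ((N : ℝ)) - X i ^ 2
        = ((N : MvPolynomial (Fin n) ℝ) - ∑ j : Fin n, X j ^ 2)
          + ∑ j ∈ Finset.univ.erase i, X j ^ 2 := by
      rw [map_natCast (C : ℝ →+* MvPolynomial (Fin n) ℝ) N,
        ← Finset.add_sum_erase Finset.univ (fun j => X j ^ 2) (Finset.mem_univ i)]
      ring
    rw [heq]
    exact QM.add_sum_mem hM _ _ (fun j _ => QM.sq_mem hM (X j)) hN
  have hXH : ∀ i : Fin n, X i ∈ Hbdd M := by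
    intro i
    have hhalf : (C ((1:ℝ)/4) : MvPolynomial (Fin n) ℝ) = C (1/2) * C (1/2) := by
      rw [← map_mul]; norm_num
    have hkey : (C ((1:ℝ)/2) : MvPolynomial (Fin n) ℝ) * 2 = 1 := by
      rw [show ((2 : MvPolynomial (Fin n) ℝ)) = C (2 : ℝ) from
        (map_ofNat (C : ℝ →+* MvPolynomial (Fin n) ℝ) 2).symm, ← map_mul]
      norm_num
    refine ⟨(N : ℝ) + 1/4, ?_, ?_⟩
    · have h1 := hM.2.2 (X i - C (1/2 : ℝ)) 1 hM.1
      rw [mul_one] at h1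
      have h2 := hM.2.1 _ h1 _ (hsq i)
      rwa [show (X i - C (1/2 : ℝ)) ^ 2 + (C ((N : ℝ)) - X i ^ 2)
          = C ((N : ℝ) + 1/4) - X i by
            rw [map_add, hhalf]; ring_nf; rw [mul_assoc, hkey, mul_one]] at h2
    · have h1 := hM.2.2 (X i + C (1/2 : ℝ)) 1 hM.1
      rw [mul_one] at h1
      have h2 := hM.2.1 _ h1 _ (hsq i)
      rwa [show (X i + C (1/2 : ℝ)) ^ 2 + (C ((N : ℝ)) - X i ^ 2)
          = C ((N : ℝ) + 1/4) + X i by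
            rw [map_add, hhalf]; ring_nf; rw [mul_assoc, hkey, mul_one]] at h2
  exact QM.arch_of_X_mem hM hXH

lemma QM.d_implies_arch (hM : IsQuadraticModule M)
    (hd : ∀ f : MvPolynomial (Fin n) ℝ, f.totalDegree ≤ 1 →
      ∃ N : ℕ, (N : MvPolynomial (Fin n) ℝ) + f ∈ M) :
    IsArchimedeanQM M := by
  have hXH : ∀ i : Fin n, X i ∈ Hbdd M := by
    intro i
    obtain ⟨N1, hN1⟩ := hd (X i) (le_of_eq (totalDegree_X i))
    obtain ⟨N2, hN2⟩ := hd (-(X i)) (by rw [totalDegree_neg]; exact le_of_eq (totalDegree_X i))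
    refine ⟨max (N1 : ℝ) (N2 : ℝ), ?_, ?_⟩
    · have h1 : C ((N2 : ℝ)) - X i ∈ M := by
        rw [map_natCast (C : ℝ →+* MvPolynomial (Fin n) ℝ) N2, sub_eq_add_neg]
        exact hN2
      exact QM.shiftC hM (le_max_right _ _) h1
    · have h1 : C ((N1 : ℝ)) - (-(X i)) ∈ M := by
        rw [map_natCast (C : ℝ →+* MvPolynomial (Fin n) ℝ) N1, sub_neg_eq_add]
        exact hN1
      have h2 := QM.shiftC hM (le_max_left (N1 : ℝ) (N2 : ℝ)) h1
      rwa [sub_neg_eq_add] at h2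
  exact QM.arch_of_X_mem hM hXH

lemma QM.arch_implies_c (hM : IsQuadraticModule M) (harch : IsArchimedeanQM M) :
    ∃ (m : ℕ) (g : Fin m → MvPolynomial (Fin n) ℝ),
      (∀ i, (g i).totalDegree ≤ 1 ∧ g i ∈ M) ∧
      (SolSet g).Nonempty ∧ IsCompact (SolSet g) := by
  have hK : ∀ i : Fin n, ∃ K : ℕ, (K : MvPolynomial (Fin n) ℝ) + X i ∈ M := by
    intro i
    obtain ⟨K, hK⟩ := harch (-(X i))
    rw [sub_neg_eq_add] at hK
    exact ⟨K, hK⟩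
  choose K hKmem using hK
  obtain ⟨N, hN⟩ := harch (∑ i : Fin n, X i)
  exact box_construction M K N hKmem hN

end QMfacts

theorem stmt_0 {n : ℕ} (M : Set (MvPolynomial (Fin n) ℝ)) (hM : IsQuadraticModule M) :
    (IsArchimedeanQM M ↔
      ∃ N : ℕ, (N : MvPolynomial (Fin n) ℝ) - ∑ i : Fin n, X i ^ 2 ∈ M) ∧
    (IsArchimedeanQM M ↔
      ∃ (m : ℕ) (g : Fin m → MvPolynomial (Fin n) ℝ),
        (∀ i, (g i).totalDegree ≤ 1 ∧ g i ∈ M) ∧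
        (SolSet g).Nonempty ∧ IsCompact (SolSet g)) ∧
    (IsArchimedeanQM M ↔
      ∀ f : MvPolynomial (Fin n) ℝ, f.totalDegree ≤ 1 →
        ∃ N : ℕ, (N : MvPolynomial (Fin n) ℝ) + f ∈ M) := by
  have harch_d : IsArchimedeanQM M →
      ∀ f : MvPolynomial (Fin n) ℝ, f.totalDegree ≤ 1 →
        ∃ N : ℕ, (N : MvPolynomial (Fin n) ℝ) + f ∈ M := by
    intro h f _
    obtain ⟨N, hN⟩ := h (-f)
    rw [sub_neg_eq_add] at hN
    exact ⟨N, hN⟩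
  refine ⟨⟨fun h => h _, QM.b_implies_arch hM⟩,
    ⟨QM.arch_implies_c hM, fun hc => QM.d_implies_arch hM (c_implies_d hM hc)⟩,
    ⟨harch_d, QM.d_implies_arch hM⟩⟩
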